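/- (IPTW change of measure over restricted histories) Under consistency, temporal ordering, SRA, and positivity, for every t with s-1 ≤ t ≤ K, every regimen ā = ā(t-s+1,t), and every bounded function φ of (Ā(t-s), L̄(t+1)): E[ 1{Ā(t-s+1,t)=ā} · φ(Ā(t-s), L̄(t+1)) / ∏_{j=t-s+1}^{t} g(A(j) | Ā(j-1), L̄(j)) ] = E[ φ(Ā(t-s), L̄_{ā}(t+1)) ], where L̄_{ā}(t+1) denotes the counterfactual covariate process under intervention ā on times t-s+1,...,t with earlier treatments left random. -/

import Mathlib

open Finset
open scoped Classical

noncomputable section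

def pr {Ω : Type} [Fintype Ω] (μ : Ω → ℝ) (E : Ω → Prop) : ℝ :=
  ∑ ω, if E ω then μ ω else 0

def cpr {Ω : Type} [Fintype Ω] (μ : Ω → ℝ) (E F : Ω → Prop) : ℝ :=
  pr μ (fun ω => E ω ∧ F ω) / pr μ F

def ex {Ω : Type} [Fintype Ω] (μ : Ω → ℝ) (f : Ω → ℝ) : ℝ :=
  ∑ ω, f ω * μ ω

def cex {Ω : Type} [Fintype Ω] (μ : Ω → ℝ) (f : Ω → ℝ) (F : Ω → Prop) : ℝ :=
  (∑ ω, if F ω then f ω * μ ω else 0) / pr μ F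

lemma pr_congr {Ω : Type} [Fintype Ω] (μ : Ω → ℝ) {E F : Ω → Prop}
    (h : ∀ ω, E ω ↔ F ω) : pr μ E = pr μ F := by
  unfold pr
  exact Finset.sum_congr rfl fun ω _ => if_congr (h ω) rfl rfl

lemma cpr_congr {Ω : Type} [Fintype Ω] (μ : Ω → ℝ) {E E' F F' : Ω → Prop}
    (hE : ∀ ω, E ω ↔ E' ω) (hF : ∀ ω, F ω ↔ F' ω) : cpr μ E F = cpr μ E' F' := by
  unfold cpr
  rw [pr_congr μ (fun ω => and_congr (hE ω) (hF ω)), pr_congr μ hF]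

lemma pr_pos {Ω : Type} [Fintype Ω] {μ : Ω → ℝ} (hμ : ∀ ω, 0 ≤ μ ω) {E : Ω → Prop}
    {ω0 : Ω} (h0 : 0 < μ ω0) (hE : E ω0) : 0 < pr μ E := by
  have h1 : ∀ ω ∈ Finset.univ, (0:ℝ) ≤ if E ω then μ ω else 0 := by
    intro ω _; split <;> simp [hμ ω]
  have h2 := Finset.single_le_sum h1 (Finset.mem_univ ω0)
  rw [if_pos hE] at h2
  exact lt_of_lt_of_le h0 h2

lemma cpr_mul_pr {Ω : Type} [Fintype Ω] (μ : Ω → ℝ) (E F : Ω → Prop)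
    (h : pr μ F ≠ 0) : cpr μ E F * pr μ F = pr μ (fun ω => E ω ∧ F ω) := by
  unfold cpr
  exact div_mul_cancel₀ _ h

lemma step_lemma {Ω 𝒜 ℒ : Type} [Fintype Ω]
    (μ : Ω → ℝ) (hμ : ∀ ω, 0 ≤ μ ω)
    (A : ℕ → Ω → 𝒜) (CL : (ℕ → 𝒜) → ℕ → Ω → ℒ) (L : ℕ → Ω → ℒ)
    (hTO : ∀ (a a' : ℕ → 𝒜) (j : ℕ), (∀ i < j, a i = a' i) → ∀ ω, CL a j ω = CL a' j ω)
    (hcons : ∀ j ω, L j ω = CL (fun i => A i ω) j ω)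
    (m : ℕ) (a : 𝒜)
    (SRAm : ∀ (x : (ℕ → 𝒜) → ℕ → ℒ) (abb : ℕ → 𝒜) (lb : ℕ → ℒ),
      pr μ (fun ω => (∀ i < m, A i ω = abb i) ∧ (∀ i ≤ m, L i ω = lb i)) > 0 →
      cpr μ (fun ω => A m ω = a ∧ ∀ (ar : ℕ → 𝒜) (jj : ℕ), CL ar jj ω = x ar jj)
        (fun ω => (∀ i < m, A i ω = abb i) ∧ (∀ i ≤ m, L i ω = lb i)) =
      cpr μ (fun ω => A m ω = a)
        (fun ω => (∀ i < m, A i ω = abb i) ∧ (∀ i ≤ m, L i ω = lb i)) *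
      cpr μ (fun ω => ∀ (ar : ℕ → 𝒜) (jj : ℕ), CL ar jj ω = x ar jj)
        (fun ω => (∀ i < m, A i ω = abb i) ∧ (∀ i ≤ m, L i ω = lb i)))
    (POSm : ∀ ω : Ω, μ ω > 0 →
      cpr μ (fun ω' => A m ω' = a)
        (fun ω' => (∀ i < m, A i ω' = A i ω) ∧ (∀ i ≤ m, L i ω' = L i ω)) > 0)
    (G : Ω → ℝ)
    (hG : ∀ ω ω', (∀ i < m, A i ω = A i ω') →
      (∀ (ar : ℕ → 𝒜) (jj : ℕ), CL ar jj ω = CL ar jj ω') → G ω = G ω') :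
    ∑ ω, (if A m ω = a then G ω else 0) /
      cpr μ (fun ω' => A m ω' = a)
        (fun ω' => (∀ i < m, A i ω' = A i ω) ∧ (∀ i ≤ m, L i ω' = L i ω)) * μ ω
    = ∑ ω, G ω * μ ω := by
  classical
  set k : Ω → (Fin m → 𝒜) × ((ℕ → 𝒜) → ℕ → ℒ) :=
    fun ω => (fun i => A i.1 ω, fun ar jj => CL ar jj ω) with hk
  have hmaps : ∀ ω ∈ (Finset.univ : Finset Ω), k ω ∈ Finset.univ.image k :=
    fun ω _ => Finset.mem_image_of_mem k (Finset.mem_univ ω)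
  rw [← Finset.sum_fiberwise_of_maps_to hmaps
    (fun ω => (if A m ω = a then G ω else 0) /
      cpr μ (fun ω' => A m ω' = a)
        (fun ω' => (∀ i < m, A i ω' = A i ω) ∧ (∀ i ≤ m, L i ω' = L i ω)) * μ ω),
    ← Finset.sum_fiberwise_of_maps_to hmaps (fun ω => G ω * μ ω)]
  apply Finset.sum_congr rfl
  intro v _
  by_cases hpos : ∃ ω0, k ω0 = v ∧ 0 < μ ω0
  · obtain ⟨ω0, hkv0, hμ0⟩ := hpos
    -- basic facts about the fiber
    have hA0 : ∀ ω, k ω = v → ∀ i, i < m → A i ω = A i ω0 := by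
      intro ω hω i hi
      have : k ω = k ω0 := by rw [hω, hkv0]
      have h1 := congrArg Prod.fst this
      exact congrFun h1 ⟨i, hi⟩
    have hCL0 : ∀ ω, k ω = v → ∀ (ar : ℕ → 𝒜) (jj : ℕ), CL ar jj ω = CL ar jj ω0 := by
      intro ω hω ar jj
      have : k ω = k ω0 := by rw [hω, hkv0]
      have h1 := congrArg Prod.snd this
      exact congrFun (congrFun h1 ar) jj
    have hL0 : ∀ ω, k ω = v → ∀ i, i ≤ m → L i ω = L i ω0 := by
      intro ω hω i hi
      rw [hcons, hcons]
      have h1 : CL (fun i' => A i' ω) i ω = CL (fun i' => A i' ω0) i ω :=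
        hTO _ _ i (fun i' hi' => hA0 ω hω i' (lt_of_lt_of_le hi' hi)) ω
      rw [h1, hCL0 ω hω]
    set H : Ω → Prop :=
      fun ω' => (∀ i < m, A i ω' = A i ω0) ∧ (∀ i ≤ m, L i ω' = L i ω0) with hH
    set x : (ℕ → 𝒜) → ℕ → ℒ := fun ar jj => CL ar jj ω0 with hx
    set c : ℝ := cpr μ (fun ω' => A m ω' = a) H with hc
    have hkiff : ∀ ω, k ω = v ↔ ((∀ (ar : ℕ → 𝒜) (jj : ℕ), CL ar jj ω = x ar jj) ∧ H ω) := by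
      intro ω
      constructor
      · intro hω
        exact ⟨hCL0 ω hω, hA0 ω hω, hL0 ω hω⟩
      · rintro ⟨hcl, hA, hL⟩
        rw [← hkv0]
        apply Prod.ext
        · funext i; exact hA i.1 i.2
        · funext ar jj; exact hcl ar jj
    -- the denominator is constant on the fiber
    have hden : ∀ ω, k ω = v →
        cpr μ (fun ω' => A m ω' = a)
          (fun ω' => (∀ i < m, A i ω' = A i ω) ∧ (∀ i ≤ m, L i ω' = L i ω)) = c := by
      intro ω hω
      apply cpr_congr μ (fun _ => Iff.rfl)
      intro ω'
      constructor
      · rintro ⟨h1, h2⟩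
        exact ⟨fun i hi => (h1 i hi).trans (hA0 ω hω i hi),
               fun i hi => (h2 i hi).trans (hL0 ω hω i hi)⟩
      · rintro ⟨h1, h2⟩
        exact ⟨fun i hi => (h1 i hi).trans (hA0 ω hω i hi).symm,
               fun i hi => (h2 i hi).trans (hL0 ω hω i hi).symm⟩
    have hGc : ∀ ω, k ω = v → G ω = G ω0 :=
      fun ω hω => hG ω ω0 (hA0 ω hω) (hCL0 ω hω)
    have hprH : 0 < pr μ H :=
      pr_pos hμ hμ0 ⟨fun _ _ => rfl, fun _ _ => rfl⟩
    have hcpos : 0 < c := POSm ω0 hμ0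
    -- key factorization from SRA
    have hSRA := SRAm x (fun i => A i ω0) (fun i => L i ω0) (by
      apply pr_pos hμ hμ0
      exact ⟨fun _ _ => rfl, fun _ _ => rfl⟩)
    have hfac : pr μ (fun ω => (A m ω = a ∧ ∀ (ar : ℕ → 𝒜) (jj : ℕ), CL ar jj ω = x ar jj) ∧ H ω)
        = c * pr μ (fun ω => (∀ (ar : ℕ → 𝒜) (jj : ℕ), CL ar jj ω = x ar jj) ∧ H ω) := by
      have h1 := cpr_mul_pr μ
        (fun ω => A m ω = a ∧ ∀ (ar : ℕ → 𝒜) (jj : ℕ), CL ar jj ω = x ar jj) H (ne_of_gt hprH)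
      have h2 := cpr_mul_pr μ
        (fun ω => ∀ (ar : ℕ → 𝒜) (jj : ℕ), CL ar jj ω = x ar jj) H (ne_of_gt hprH)
      rw [← h1, ← h2, hSRA]
      ring
    -- rewrite both fiber sums
    have hLHS : ∑ ω ∈ Finset.univ with k ω = v,
        (if A m ω = a then G ω else 0) /
          cpr μ (fun ω' => A m ω' = a)
            (fun ω' => (∀ i < m, A i ω' = A i ω) ∧ (∀ i ≤ m, L i ω' = L i ω)) * μ ω
        = (G ω0 / c) *
          pr μ (fun ω => (A m ω = a ∧ ∀ (ar : ℕ → 𝒜) (jj : ℕ), CL ar jj ω = x ar jj) ∧ H ω) := by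
      have : ∀ ω ∈ Finset.univ.filter (fun ω => k ω = v),
          (if A m ω = a then G ω else 0) /
            cpr μ (fun ω' => A m ω' = a)
              (fun ω' => (∀ i < m, A i ω' = A i ω) ∧ (∀ i ≤ m, L i ω' = L i ω)) * μ ω
          = (G ω0 / c) * (if A m ω = a then μ ω else 0) := by
        intro ω hω
        have hkω : k ω = v := (Finset.mem_filter.1 hω).2
        rw [hden ω hkω]
        by_cases hAm : A m ω = a
        · rw [if_pos hAm, if_pos hAm, hGc ω hkω]
        · rw [if_neg hAm, if_neg hAm]; ring
      rw [Finset.sum_congr rfl this, ← Finset.mul_sum]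
      congr 1
      rw [Finset.sum_filter]
      apply Finset.sum_congr rfl
      intro ω _
      by_cases hkω : k ω = v
      · rw [if_pos hkω]
        by_cases hAm : A m ω = a
        · rw [if_pos hAm, if_pos ⟨⟨hAm, ((hkiff ω).1 hkω).1⟩, ((hkiff ω).1 hkω).2⟩]
        · rw [if_neg hAm, if_neg (by rintro ⟨⟨h, _⟩, _⟩; exact hAm h)]
      · rw [if_neg hkω, if_neg (by rintro ⟨⟨_, h1⟩, h2⟩; exact hkω ((hkiff ω).2 ⟨h1, h2⟩))]
    have hRHS : ∑ ω ∈ Finset.univ with k ω = v, G ω * μ ω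
        = G ω0 * pr μ (fun ω => (∀ (ar : ℕ → 𝒜) (jj : ℕ), CL ar jj ω = x ar jj) ∧ H ω) := by
      have : ∀ ω ∈ Finset.univ.filter (fun ω => k ω = v),
          G ω * μ ω = G ω0 * μ ω := by
        intro ω hω
        rw [hGc ω (Finset.mem_filter.1 hω).2]
      rw [Finset.sum_congr rfl this, ← Finset.mul_sum]
      congr 1
      rw [Finset.sum_filter]
      apply Finset.sum_congr rfl
      intro ω _
      by_cases hkω : k ω = v
      · rw [if_pos hkω, if_pos ((hkiff ω).1 hkω)]
      · rw [if_neg hkω, if_neg (fun h => hkω ((hkiff ω).2 h))]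
    rw [hLHS, hRHS, hfac]
    field_simp
  · push_neg at hpos
    have hz : ∀ ω, k ω = v → μ ω = 0 := by
      intro ω hω
      exact le_antisymm (hpos ω hω) (hμ ω)
    rw [Finset.sum_eq_zero, Finset.sum_eq_zero]
    · intro ω hω
      rw [hz ω (Finset.mem_filter.1 hω).2, mul_zero]
    · intro ω hω
      rw [hz ω (Finset.mem_filter.1 hω).2, mul_zero]


/-- IPTW change of measure over restricted histories: inverse
probability weighting by the restricted treatment mechanism recovers the
counterfactual distribution under intervention `ā(t-s+1,t)` with earlier
treatments left random. -/
theorem iptw_change_of_measure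
    {Ω 𝒜 ℒ : Type} [Fintype Ω]
    (μ : Ω → ℝ) (hμ : ∀ ω, 0 ≤ μ ω) (hsum : ∑ ω, μ ω = 1)
    (K s : ℕ) (hs : 1 ≤ s) (hsK : s ≤ K + 1)
    (A : ℕ → Ω → 𝒜) (CL : (ℕ → 𝒜) → ℕ → Ω → ℒ) (L : ℕ → Ω → ℒ)
    (hTO : ∀ (a a' : ℕ → 𝒜) (j : ℕ), (∀ i < j, a i = a' i) → ∀ ω, CL a j ω = CL a' j ω)
    (hcons : ∀ j ω, L j ω = CL (fun i => A i ω) j ω)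
    (SRA : ∀ j ≤ K, ∀ (a : 𝒜) (x : (ℕ → 𝒜) → ℕ → ℒ) (ab : ℕ → 𝒜) (lb : ℕ → ℒ),
      pr μ (fun ω => (∀ i < j, A i ω = ab i) ∧ (∀ i ≤ j, L i ω = lb i)) > 0 →
      cpr μ (fun ω => A j ω = a ∧ ∀ (ar : ℕ → 𝒜) (jj : ℕ), CL ar jj ω = x ar jj)
        (fun ω => (∀ i < j, A i ω = ab i) ∧ (∀ i ≤ j, L i ω = lb i)) =
      cpr μ (fun ω => A j ω = a)
        (fun ω => (∀ i < j, A i ω = ab i) ∧ (∀ i ≤ j, L i ω = lb i)) *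
      cpr μ (fun ω => ∀ (ar : ℕ → 𝒜) (jj : ℕ), CL ar jj ω = x ar jj)
        (fun ω => (∀ i < j, A i ω = ab i) ∧ (∀ i ≤ j, L i ω = lb i)))
    (t : ℕ) (ht1 : s - 1 ≤ t) (ht2 : t ≤ K) (ab : ℕ → 𝒜)
    (POS : ∀ j, t + 1 - s ≤ j → j ≤ t → ∀ (a : 𝒜) (ω : Ω), μ ω > 0 →
      cpr μ (fun ω' => A j ω' = a)
        (fun ω' => (∀ i < j, A i ω' = A i ω) ∧ (∀ i ≤ j, L i ω' = L i ω)) > 0)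
    (φ : (ℕ → 𝒜) → (ℕ → ℒ) → ℝ)
    (hφ : ∀ (a a' : ℕ → 𝒜) (l l' : ℕ → ℒ), (∀ i < t + 1 - s, a i = a' i) →
      (∀ i ≤ t + 1, l i = l' i) → φ a l = φ a' l') :
    ex μ (fun ω =>
      (if ∀ j, t + 1 - s ≤ j → j ≤ t → A j ω = ab j then (1 : ℝ) else 0) *
      φ (fun i => A i ω) (fun i => L i ω) /
      ∏ j ∈ Finset.Ico (t + 1 - s) (t + 1),
        cpr μ (fun ω' => A j ω' = A j ω)
          (fun ω' => (∀ i < j, A i ω' = A i ω) ∧ (∀ i ≤ j, L i ω' = L i ω))) =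
    ex μ (fun ω => φ (fun i => A i ω)
      (fun i => CL (fun i' => if i' < t + 1 - s then A i' ω else ab i') i ω)) := by
  classical
  have htmsle : t + 1 - s ≤ t := by omega
  set tms := t + 1 - s with htms
  -- the interpolating quantity
  set S : ℕ → ℝ := fun m => ∑ ω,
    (if ∀ j, tms ≤ j → j < m → A j ω = ab j then (1:ℝ) else 0) *
      φ (fun i => A i ω) (fun i => CL (fun i' => if i' < m then A i' ω else ab i') i ω) /
      (∏ j ∈ Finset.Ico tms m,
        cpr μ (fun ω' => A j ω' = ab j)
          (fun ω' => (∀ i < j, A i ω' = A i ω) ∧ (∀ i ≤ j, L i ω' = L i ω))) * μ ω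
    with hS
  -- one step of the induction
  have hstep : ∀ m, tms ≤ m → m ≤ t → S (m + 1) = S m := by
    intro m hm hmt
    set G : Ω → ℝ := fun ω =>
      (if ∀ j, tms ≤ j → j < m → A j ω = ab j then (1:ℝ) else 0) *
        φ (fun i => A i ω) (fun i => CL (fun i' => if i' < m then A i' ω else ab i') i ω) /
        (∏ j ∈ Finset.Ico tms m,
          cpr μ (fun ω' => A j ω' = ab j)
            (fun ω' => (∀ i < j, A i ω' = A i ω) ∧ (∀ i ≤ j, L i ω' = L i ω))) with hG'
    have hsplit : S (m + 1) = ∑ ω, (if A m ω = ab m then G ω else 0) /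
        cpr μ (fun ω' => A m ω' = ab m)
          (fun ω' => (∀ i < m, A i ω' = A i ω) ∧ (∀ i ≤ m, L i ω' = L i ω)) * μ ω := by
      rw [hS]
      apply Finset.sum_congr rfl
      intro ω _
      by_cases hAm : A m ω = ab m
      · have hind : (∀ j, tms ≤ j → j < m + 1 → A j ω = ab j) ↔
            (∀ j, tms ≤ j → j < m → A j ω = ab j) := by
          constructor
          · intro h j h1 h2; exact h j h1 (Nat.lt_succ_of_lt h2)
          · intro h j h1 h2
            rcases Nat.lt_succ_iff_lt_or_eq.1 h2 with h' | h'
            · exact h j h1 h'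
            · rw [h']; exact hAm
        have hifeq : (if ∀ j, tms ≤ j → j < m + 1 → A j ω = ab j then (1:ℝ) else 0) =
            (if ∀ j, tms ≤ j → j < m → A j ω = ab j then (1:ℝ) else 0) :=
          if_congr hind rfl rfl
        have hfun : (fun i' => if i' < m + 1 then A i' ω else ab i') =
            (fun i' => if i' < m then A i' ω else ab i') := by
          funext i'
          by_cases h1 : i' < m
          · simp [h1, Nat.lt_succ_of_lt h1]
          · by_cases h2 : i' = m
            · subst h2; simp [hAm]
            · have h3 : ¬ i' < m + 1 := by omega
              simp [h1, h3]
        rw [hifeq, hfun, Finset.prod_Ico_succ_top hm, if_pos hAm, ← div_div]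
      · have hnot : ¬ (∀ j, tms ≤ j → j < m + 1 → A j ω = ab j) :=
          fun h => hAm (h m hm (Nat.lt_succ_self m))
        rw [if_neg hnot, if_neg hAm]
        simp
    have hGinv : ∀ ω ω', (∀ i < m, A i ω = A i ω') →
        (∀ (ar : ℕ → 𝒜) (jj : ℕ), CL ar jj ω = CL ar jj ω') → G ω = G ω' := by
      intro ω ω' hAe hCLe
      have hLe : ∀ i, i < m → L i ω = L i ω' := by
        intro i hi
        rw [hcons, hcons]
        have h1 : CL (fun i' => A i' ω) i ω = CL (fun i' => A i' ω') i ω :=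
          hTO _ _ i (fun i' hi' => hAe i' (lt_trans hi' hi)) ω
        rw [h1, hCLe]
      have hind2 : (if ∀ j, tms ≤ j → j < m → A j ω = ab j then (1:ℝ) else 0) =
          (if ∀ j, tms ≤ j → j < m → A j ω' = ab j then (1:ℝ) else 0) := by
        apply if_congr _ rfl rfl
        constructor
        · intro h j h1 h2; rw [← hAe j h2]; exact h j h1 h2
        · intro h j h1 h2; rw [hAe j h2]; exact h j h1 h2
      have hphi : φ (fun i => A i ω)
            (fun i => CL (fun i' => if i' < m then A i' ω else ab i') i ω)
          = φ (fun i => A i ω')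
            (fun i => CL (fun i' => if i' < m then A i' ω' else ab i') i ω') := by
        apply hφ
        · intro i hi; exact hAe i (lt_of_lt_of_le hi hm)
        · intro i _
          have hcc : (fun i' => if i' < m then A i' ω else ab i') =
              (fun i' => if i' < m then A i' ω' else ab i') := by
            funext i'
            by_cases h1 : i' < m
            · simp [h1, hAe i' h1]
            · simp [h1]
          rw [hcc, hCLe]
      have hprod : (∏ j ∈ Finset.Ico tms m,
            cpr μ (fun ω'' => A j ω'' = ab j)
              (fun ω'' => (∀ i < j, A i ω'' = A i ω) ∧ (∀ i ≤ j, L i ω'' = L i ω)))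
          = ∏ j ∈ Finset.Ico tms m,
            cpr μ (fun ω'' => A j ω'' = ab j)
              (fun ω'' => (∀ i < j, A i ω'' = A i ω') ∧ (∀ i ≤ j, L i ω'' = L i ω')) := by
        apply Finset.prod_congr rfl
        intro j hj
        have hjm : j < m := (Finset.mem_Ico.1 hj).2
        apply cpr_congr μ (fun _ => Iff.rfl)
        intro ω''
        constructor
        · rintro ⟨h1, h2⟩
          exact ⟨fun i hi => (h1 i hi).trans (hAe i (lt_trans hi hjm)),
                 fun i hi => (h2 i hi).trans (hLe i (lt_of_le_of_lt hi hjm))⟩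
        · rintro ⟨h1, h2⟩
          exact ⟨fun i hi => (h1 i hi).trans (hAe i (lt_trans hi hjm)).symm,
                 fun i hi => (h2 i hi).trans (hLe i (lt_of_le_of_lt hi hjm)).symm⟩
      simp only [hG']
      rw [hind2, hphi, hprod]
    rw [hsplit,
      step_lemma μ hμ A CL L hTO hcons m (ab m)
        (fun x abb lb h => SRA m (le_trans hmt ht2) (ab m) x abb lb h)
        (fun ω hω => POS m hm hmt (ab m) ω hω) G hGinv]
  -- the induction
  have main : ∀ m, tms ≤ m → m ≤ t + 1 → S m = S tms := by
    intro m
    induction m with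
    | zero =>
        intro h1 _
        have h0 : tms = 0 := Nat.le_zero.mp h1
        rw [h0]
    | succ n ih =>
        intro h1 h2
        rcases Nat.lt_or_ge tms (n + 1) with h | h
        · have hn1 : tms ≤ n := Nat.lt_succ_iff.mp h
          rw [hstep n hn1 (by omega), ih hn1 (by omega)]
        · have heq : tms = n + 1 := le_antisymm h1 h
          rw [heq]
  -- identify the endpoints
  have hleft : ex μ (fun ω =>
      (if ∀ j, tms ≤ j → j ≤ t → A j ω = ab j then (1 : ℝ) else 0) *
      φ (fun i => A i ω) (fun i => L i ω) /
      ∏ j ∈ Finset.Ico tms (t + 1),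
        cpr μ (fun ω' => A j ω' = A j ω)
          (fun ω' => (∀ i < j, A i ω' = A i ω) ∧ (∀ i ≤ j, L i ω' = L i ω))) = S (t + 1) := by
    rw [hS]
    unfold ex
    apply Finset.sum_congr rfl
    intro ω _
    beta_reduce
    by_cases h : ∀ j, tms ≤ j → j ≤ t → A j ω = ab j
    · have h' : ∀ j, tms ≤ j → j < t + 1 → A j ω = ab j :=
        fun j h1 h2 => h j h1 (Nat.lt_succ_iff.mp h2)
      rw [if_pos h, if_pos h']
      have hphi : φ (fun i => A i ω) (fun i => L i ω) = φ (fun i => A i ω)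
          (fun i => CL (fun i' => if i' < t + 1 then A i' ω else ab i') i ω) := by
        apply hφ _ _ _ _ (fun i _ => rfl)
        intro i hi
        rw [hcons]
        apply hTO
        intro i' hi'
        have : i' < t + 1 := lt_of_lt_of_le hi' hi
        simp [this]
      have hprod : (∏ j ∈ Finset.Ico tms (t + 1),
            cpr μ (fun ω' => A j ω' = A j ω)
              (fun ω' => (∀ i < j, A i ω' = A i ω) ∧ (∀ i ≤ j, L i ω' = L i ω)))
          = ∏ j ∈ Finset.Ico tms (t + 1),
            cpr μ (fun ω' => A j ω' = ab j)
              (fun ω' => (∀ i < j, A i ω' = A i ω) ∧ (∀ i ≤ j, L i ω' = L i ω)) := by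
        apply Finset.prod_congr rfl
        intro j hj
        obtain ⟨hj1, hj2⟩ := Finset.mem_Ico.1 hj
        have : A j ω = ab j := h j hj1 (Nat.lt_succ_iff.mp hj2)
        apply cpr_congr μ _ (fun _ => Iff.rfl)
        intro ω'
        rw [this]
      rw [hphi, hprod]
    · have h' : ¬ ∀ j, tms ≤ j → j < t + 1 → A j ω = ab j :=
        fun hh => h (fun j h1 h2 => hh j h1 (Nat.lt_succ_of_le h2))
      rw [if_neg h, if_neg h']
      simp
  have hright : S tms = ex μ (fun ω => φ (fun i => A i ω)
      (fun i => CL (fun i' => if i' < tms then A i' ω else ab i') i ω)) := by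
    rw [hS]
    unfold ex
    apply Finset.sum_congr rfl
    intro ω _
    have hvac : ∀ j, tms ≤ j → j < tms → A j ω = ab j :=
      fun j h1 h2 => absurd h2 (not_lt.mpr h1)
    rw [if_pos hvac, Finset.Ico_self, Finset.prod_empty, one_mul, div_one]
  rw [hleft, main (t + 1) (by omega) le_rfl, hright]
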